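/- Any integral acyclic st-flow of value F in a unit-capacity directed graph on n vertices uses at most 2n√F edges. In particular, since F ≤ n, it uses at most 2n^{3/2} edges. -/

import Mathlib

open Finset


set_option maxHeartbeats 1000000 in
/-- Any integral acyclic `st`-flow of value `F` in a unit-capacity directed
graph on `n` vertices uses at most `2n√F` edges; in particular at most
`2 n^{3/2}` edges. -/
theorem stmt2 (n : ℕ) (s t : Fin n)
    (E : Finset (Fin n × Fin n))
    (f : Fin n × Fin n → ℕ)
    (hsupp : ∀ e, f e = 1 → e ∈ E)
    (hunit : ∀ e, f e ≤ 1)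
    (hcons : ∀ v : Fin n, v ≠ s → v ≠ t →
      ∑ u : Fin n, f (v, u) = ∑ u : Fin n, f (u, v))
    (F : ℕ)
    (hval : (∑ u : Fin n, f (s, u)) = F + ∑ u : Fin n, f (u, s))
    (π : Fin n → ℕ)
    (hacyc : ∀ u v : Fin n, f (u, v) = 1 → π u < π v) :
    ((Finset.univ.filter (fun e : Fin n × Fin n => f e = 1)).card : ℝ)
        ≤ 2 * n * Real.sqrt F ∧
    ((Finset.univ.filter (fun e : Fin n × Fin n => f e = 1)).card : ℝ)
        ≤ 2 * (n : ℝ) ^ ((3 : ℝ) / 2) := by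
  classical
  have hn : 0 < n := s.pos
  -- strict topological position
  set ρ : Fin n → ℕ := fun v => π v * n + v.val with hρdef
  have hρinj : Function.Injective ρ := by
    intro u v h
    have h' : u.val + π u * n = v.val + π v * n := by
      have h2 : π u * n + u.val = π v * n + v.val := h
      omega
    have hu : u.val % n = v.val % n := by
      rw [← Nat.add_mul_mod_self_right u.val (π u) n,
        ← Nat.add_mul_mod_self_right v.val (π v) n, h']
    rw [Nat.mod_eq_of_lt u.isLt, Nat.mod_eq_of_lt v.isLt] at hu
    exact Fin.ext hu
  have hρmono : ∀ u v : Fin n, f (u, v) = 1 → ρ u < ρ v := by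
    intro u v h
    have h1 : π u + 1 ≤ π v := hacyc u v h
    have h2 : (π u + 1) * n ≤ π v * n := Nat.mul_le_mul_right n h1
    have := u.isLt
    simp only [hρdef]
    calc π u * n + u.val < π u * n + n := by omega
    _ = (π u + 1) * n := by ring
    _ ≤ π v * n := h2
    _ ≤ π v * n + v.val := Nat.le_add_right _ _
  set σ : Fin n → ℕ := fun v => (univ.filter fun u => ρ u < ρ v).card with hσdef
  have hσmono : ∀ u v : Fin n, ρ u < ρ v → σ u < σ v := by
    intro u v h
    apply Finset.card_lt_card
    rw [Finset.ssubset_iff_of_subset]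
    · exact ⟨u, by simp [hσdef, h], by simp⟩
    · intro w hw
      simp only [mem_filter, mem_univ, true_and] at hw ⊢
      exact hw.trans h
  have hσlt : ∀ v, σ v < n := by
    intro v
    have h1 : (univ.filter fun u => ρ u < ρ v).card < (univ : Finset (Fin n)).card := by
      apply Finset.card_lt_card
      rw [Finset.ssubset_iff_of_subset (filter_subset _ _)]
      exact ⟨v, mem_univ v, by simp⟩
    rw [Finset.card_univ, Fintype.card_fin] at h1
    exact h1
  have hσinj : Function.Injective σ := by
    intro u v h
    by_contra hne
    rcases (hρinj.ne hne).lt_or_gt with h' | h'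
    · exact absurd h (hσmono u v h').ne
    · exact absurd h.symm (hσmono v u h').ne
  have hσf : ∀ u v : Fin n, f (u, v) = 1 → σ u < σ v :=
    fun u v h => hσmono u v (hρmono u v h)
  set S : Finset (Fin n × Fin n) := univ.filter (fun e : Fin n × Fin n => f e = 1)
    with hSdef
  -- imbalance function
  set g : Fin n → ℤ := fun v => ((∑ u : Fin n, f (v, u) : ℕ) : ℤ)
      - ((∑ u : Fin n, f (u, v) : ℕ) : ℤ) with hgdef
  have hg_sum : ∑ v : Fin n, g v = 0 := by
    simp only [hgdef, Finset.sum_sub_distrib]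
    rw [sub_eq_zero]
    push_cast
    rw [Finset.sum_comm]
  have hg_ptwise : ∀ v : Fin n, g v ≤ if v = s then (F : ℤ) else 0 := by
    have hgs : g s = F := by
      simp only [hgdef]
      rw [hval]
      push_cast
      ring
    have hg0 : ∀ v : Fin n, v ≠ s → v ≠ t → g v = 0 := by
      intro v hvs hvt
      simp only [hgdef]
      rw [hcons v hvs hvt, sub_self]
    intro v
    by_cases hvs : v = s
    · subst hvs; simp [hgs]
    · by_cases hvt : v = t
      · subst hvt
        simp only [if_neg hvs]
        -- g t = -F ≤ 0
        have hsum : g v + ∑ w ∈ univ.erase v, g w = 0 := by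
          rw [Finset.add_sum_erase univ g (mem_univ v)]; exact hg_sum
        have herase : ∑ w ∈ univ.erase v, g w = F := by
          rw [Finset.sum_eq_single s]
          · exact hgs
          · intro w hw hws
            exact hg0 w hws (by simpa using (Finset.mem_erase.mp hw).1)
          · intro hs
            exact absurd (Finset.mem_erase.mpr ⟨fun h => hvs h.symm, mem_univ s⟩) hs
        rw [herase] at hsum
        omega
      · rw [hg0 v hvs hvt, if_neg hvs]
  -- cut bound
  have hcut : ∀ k : ℕ,
      (S.filter (fun e => σ e.1 ≤ k ∧ k < σ e.2)).card ≤ F := by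
    intro k
    set A : Finset (Fin n) := univ.filter (fun v => σ v ≤ k) with hAdef
    -- key counting identity in ℕ
    have hkey : ∑ v ∈ A, ∑ u : Fin n, f (v, u)
        = (S.filter (fun e => σ e.1 ≤ k ∧ k < σ e.2)).card
          + ∑ v ∈ A, ∑ u : Fin n, f (u, v) := by
      have hP : ∑ v ∈ A, ∑ u : Fin n, f (v, u) = ∑ e ∈ A ×ˢ univ, f e :=
        (Finset.sum_product ..).symm
      have hQ : ∑ v ∈ A, ∑ u : Fin n, f (u, v) = ∑ e ∈ univ ×ˢ A, f e := by
        rw [Finset.sum_product]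
        exact Finset.sum_comm
      rw [hP, hQ]
      rw [← Finset.sum_filter_add_sum_filter_not (A ×ˢ univ) (fun e => e.2 ∈ A) f,
        ← Finset.sum_filter_add_sum_filter_not (univ ×ˢ A) (fun e => e.1 ∈ A) f]
      have hmid : (A ×ˢ univ).filter (fun e => e.2 ∈ A)
          = (univ ×ˢ A).filter (fun e => e.1 ∈ A) := by
        ext ⟨u, v⟩
        simp only [mem_filter, mem_product, mem_univ, true_and, and_true]
        tauto
      have hZ : ∑ e ∈ (univ ×ˢ A).filter (fun e => ¬ e.1 ∈ A), f e = 0 := by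
        apply Finset.sum_eq_zero
        intro e he
        simp only [mem_filter, mem_product, mem_univ, true_and, hAdef,
          Finset.mem_filter] at he
        by_contra hne
        have hf1 : f e = 1 := by have := hunit e; omega
        have := hσf e.1 e.2 hf1
        omega
      have hY : ∑ e ∈ (A ×ˢ univ).filter (fun e => ¬ e.2 ∈ A), f e
          = (S.filter (fun e => σ e.1 ≤ k ∧ k < σ e.2)).card := by
        have h1 : ∑ e ∈ (A ×ˢ univ).filter (fun e => ¬ e.2 ∈ A), f e
            = ∑ e ∈ (A ×ˢ univ).filter (fun e => ¬ e.2 ∈ A),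
                if f e = 1 then 1 else 0 := by
          apply Finset.sum_congr rfl
          intro e _
          have := hunit e
          split <;> omega
        rw [h1, ← Finset.card_filter]
        congr 1
        ext e
        simp only [mem_filter, mem_product, mem_univ, true_and, and_true,
          hAdef, hSdef, Finset.mem_filter, not_le]
        tauto
      rw [hmid, hZ, hY]
      ring
    -- now use the imbalance bound
    have hsumA : ∑ v ∈ A, g v ≤ (F : ℤ) := by
      calc ∑ v ∈ A, g v ≤ ∑ v ∈ A, (if v = s then (F : ℤ) else 0) :=
            Finset.sum_le_sum (fun v _ => hg_ptwise v)
      _ = if s ∈ A then (F : ℤ) else 0 := Finset.sum_ite_eq' A s (fun _ => (F : ℤ))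
      _ ≤ F := by split <;> simp
    have hcast : ((S.filter (fun e => σ e.1 ≤ k ∧ k < σ e.2)).card : ℤ)
        = ∑ v ∈ A, g v := by
      simp only [hgdef, Finset.sum_sub_distrib]
      have := congrArg (fun x : ℕ => (x : ℤ)) hkey
      push_cast at this ⊢
      omega
    have h2 : ((S.filter (fun e => σ e.1 ≤ k ∧ k < σ e.2)).card : ℤ) ≤ (F : ℤ) := by
      rw [hcast]; exact hsumA
    exact_mod_cast h2
  -- span sum bound
  have hσS : ∀ e ∈ S, σ e.1 < σ e.2 := by
    intro e he
    rw [hSdef, mem_filter] at he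
    exact hσf e.1 e.2 he.2
  have hspan : ∑ e ∈ S, (σ e.2 - σ e.1) ≤ n * F := by
    have h1 : ∀ e ∈ S, σ e.2 - σ e.1
        = ∑ k ∈ Finset.range n, if σ e.1 ≤ k ∧ k < σ e.2 then 1 else 0 := by
      intro e _
      rw [← Finset.card_filter]
      have h3 : (Finset.range n).filter (fun k => σ e.1 ≤ k ∧ k < σ e.2)
          = Finset.Ico (σ e.1) (σ e.2) := by
        have h2 := hσlt e.2
        ext k
        simp only [Finset.mem_filter, Finset.mem_range, Finset.mem_Ico]
        omega
      rw [h3, Nat.card_Ico]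
    calc ∑ e ∈ S, (σ e.2 - σ e.1)
        = ∑ e ∈ S, ∑ k ∈ Finset.range n, if σ e.1 ≤ k ∧ k < σ e.2 then 1 else 0 :=
          Finset.sum_congr rfl h1
      _ = ∑ k ∈ Finset.range n, ∑ e ∈ S, if σ e.1 ≤ k ∧ k < σ e.2 then 1 else 0 :=
          Finset.sum_comm
      _ = ∑ k ∈ Finset.range n, (S.filter (fun e => σ e.1 ≤ k ∧ k < σ e.2)).card := by
          refine Finset.sum_congr rfl (fun k _ => ?_)
          rw [Finset.card_filter]
      _ ≤ ∑ _k ∈ Finset.range n, F := Finset.sum_le_sum (fun k _ => hcut k)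
      _ = n * F := by rw [Finset.sum_const, Finset.card_range, smul_eq_mul]
  set c : ℕ := Nat.sqrt F + 1 with hcdef
  have hlong : c * (S.filter (fun e => c ≤ σ e.2 - σ e.1)).card ≤ n * F := by
    calc c * (S.filter (fun e => c ≤ σ e.2 - σ e.1)).card
        = ∑ _e ∈ S.filter (fun e => c ≤ σ e.2 - σ e.1), c := by
          rw [Finset.sum_const, smul_eq_mul, mul_comm]
      _ ≤ ∑ e ∈ S.filter (fun e => c ≤ σ e.2 - σ e.1), (σ e.2 - σ e.1) :=
          Finset.sum_le_sum (fun e he => (Finset.mem_filter.mp he).2)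
      _ ≤ ∑ e ∈ S, (σ e.2 - σ e.1) :=
          Finset.sum_le_sum_of_subset (Finset.filter_subset _ _)
      _ ≤ n * F := hspan
  have hshort : (S.filter (fun e => ¬ c ≤ σ e.2 - σ e.1)).card ≤ n * Nat.sqrt F := by
    have hinj := Finset.card_le_card_of_injOn
      (f := fun e : Fin n × Fin n => (e.1, σ e.2 - σ e.1))
      (s := S.filter (fun e => ¬ c ≤ σ e.2 - σ e.1))
      (t := (univ : Finset (Fin n)) ×ˢ Finset.Ico 1 c)
      ?_ ?_
    · rwa [Finset.card_product, Finset.card_univ, Fintype.card_fin, Nat.card_Ico,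
        Nat.add_sub_cancel] at hinj
    · intro e he
      rw [Finset.mem_coe, Finset.mem_filter] at he
      rw [Finset.mem_coe]
      have h1 := hσS e he.1
      have h2 := he.2
      refine Finset.mem_product.mpr ⟨mem_univ _, Finset.mem_Ico.mpr ?_⟩
      show 1 ≤ σ e.2 - σ e.1 ∧ σ e.2 - σ e.1 < c
      omega
    · intro e1 h1 e2 h2 heq
      rw [Finset.mem_coe, Finset.mem_filter] at h1 h2
      have hs1 := hσS e1 h1.1
      have hs2 := hσS e2 h2.1
      rw [Prod.mk.injEq] at heq
      obtain ⟨hfst, hsnd⟩ := heq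
      have hσ1 : σ e1.1 = σ e2.1 := by rw [hfst]
      have hσ2 : σ e1.2 = σ e2.2 := by omega
      exact Prod.ext hfst (hσinj hσ2)
  have hsplit : S.card ≤ (S.filter (fun e => c ≤ σ e.2 - σ e.1)).card
      + (S.filter (fun e => ¬ c ≤ σ e.2 - σ e.1)).card := by
    have hsub : S ⊆ (S.filter (fun e => c ≤ σ e.2 - σ e.1))
        ∪ (S.filter (fun e => ¬ c ≤ σ e.2 - σ e.1)) := by
      intro e he
      by_cases hca : c ≤ σ e.2 - σ e.1
      · exact Finset.mem_union_left _ (Finset.mem_filter.mpr ⟨he, hca⟩)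
      · exact Finset.mem_union_right _ (Finset.mem_filter.mpr ⟨he, hca⟩)
    exact le_trans (Finset.card_le_card hsub) (Finset.card_union_le _ _)
  -- real arithmetic
  have hsqrtF_nonneg : (0:ℝ) ≤ Real.sqrt F := Real.sqrt_nonneg _
  have hcpos : (0:ℝ) < (c:ℝ) := by
    have : 0 < c := by omega
    exact_mod_cast this
  have hFc : (F:ℝ) < (c:ℝ) * (c:ℝ) := by
    have h := Nat.lt_succ_sqrt F
    have h2 : F < c * c := by rw [hcdef]; exact h
    exact_mod_cast h2
  have hcR : Real.sqrt F < (c:ℝ) := by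
    rw [Real.sqrt_lt' hcpos]
    nlinarith
  have hF2 : Real.sqrt F * Real.sqrt F = (F:ℝ) :=
    Real.mul_self_sqrt (by positivity)
  have hlongR : ((S.filter (fun e => c ≤ σ e.2 - σ e.1)).card : ℝ)
      ≤ n * Real.sqrt F := by
    have h1 : (c:ℝ) * ((S.filter (fun e => c ≤ σ e.2 - σ e.1)).card : ℝ)
        ≤ (n:ℝ) * F := by exact_mod_cast hlong
    have hn0 : (0:ℝ) ≤ (n:ℝ) := Nat.cast_nonneg n
    nlinarith [mul_nonneg hn0 hsqrtF_nonneg,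
      (Nat.cast_nonneg _ : (0:ℝ) ≤ ((S.filter (fun e => c ≤ σ e.2 - σ e.1)).card : ℝ))]
  have hnsqrtF : ((Nat.sqrt F : ℕ) : ℝ) ≤ Real.sqrt F := by
    have h1 : ((Nat.sqrt F : ℕ) : ℝ) ^ 2 ≤ (F:ℝ) := by
      exact_mod_cast Nat.sqrt_le' F
    nlinarith [(Nat.cast_nonneg (Nat.sqrt F) : (0:ℝ) ≤ ((Nat.sqrt F : ℕ) : ℝ)),
      hsqrtF_nonneg, hF2]
  have hshortR : ((S.filter (fun e => ¬ c ≤ σ e.2 - σ e.1)).card : ℝ)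
      ≤ n * Real.sqrt F := by
    have h1 : ((S.filter (fun e => ¬ c ≤ σ e.2 - σ e.1)).card : ℝ)
        ≤ (n:ℝ) * (Nat.sqrt F : ℕ) := by exact_mod_cast hshort
    have hn0 : (0:ℝ) ≤ (n:ℝ) := Nat.cast_nonneg n
    nlinarith
  have hmain : (S.card : ℝ) ≤ 2 * n * Real.sqrt F := by
    have hs' : (S.card : ℝ) ≤ ((S.filter (fun e => c ≤ σ e.2 - σ e.1)).card : ℝ)
        + ((S.filter (fun e => ¬ c ≤ σ e.2 - σ e.1)).card : ℝ) := by
      exact_mod_cast hsplit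
    linarith
  refine ⟨hmain, ?_⟩
  have hFn : F ≤ n := by
    have h1 : ∑ u : Fin n, f (s, u) ≤ ∑ _u : Fin n, 1 :=
      Finset.sum_le_sum (fun u _ => hunit _)
    rw [Finset.sum_const, Finset.card_univ, Fintype.card_fin, smul_eq_mul,
      mul_one] at h1
    omega
  have hnRpos : (0:ℝ) < (n:ℝ) := by exact_mod_cast hn
  have hpow : (n:ℝ) ^ ((3:ℝ)/2) = (n:ℝ) * Real.sqrt n := by
    rw [show (3:ℝ)/2 = 1 + 1/2 by norm_num, Real.rpow_add hnRpos, Real.rpow_one,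
      ← Real.sqrt_eq_rpow]
  calc (S.card : ℝ) ≤ 2 * n * Real.sqrt F := hmain
    _ ≤ 2 * n * Real.sqrt n := by
        have h := Real.sqrt_le_sqrt (show (F:ℝ) ≤ (n:ℝ) by exact_mod_cast hFn)
        have : (0:ℝ) ≤ 2 * n := by positivity
        nlinarith
    _ = 2 * (n:ℝ) ^ ((3:ℝ)/2) := by rw [hpow]; ring
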